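/- Let M, N be n×n matrices with A = M + N invertible, α > 0, ω ∈ [0,2), and assume H = αI + M, S = αI + N, H + F_H and S + F_S are all invertible, with J_S = (S+F_S)⁻¹S − I and P_H = H(H+F_H)⁻¹ − I satisfying ‖J_S‖ ≤ 1 and ‖P_H‖ ≤ 1. Let x = A⁻¹b, let x̂ and Δr be vectors, set r̂ = A(x − x̂) + Δr and ŷ = (2−ω)α·(S+F_S)⁻¹(H+F_H)⁻¹·r̂. Then ‖ŷ‖ ≤ c_F·(1 + (2‖P_H‖ + ‖J_S‖)·κ(A))·‖x − x̂‖ + 4·c_F·‖A⁻¹‖·‖Δr‖, where c_F = ‖I − T_F(α,ω)‖. -/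

import Mathlib

open Matrix

/-- The spectral (operator 2-)norm of a real matrix. -/
noncomputable def specNorm {n : ℕ} (A : Matrix (Fin n) (Fin n) ℝ) : ℝ :=
  ‖Matrix.toEuclideanCLM (𝕜 := ℝ) A‖

/-- The Euclidean norm of a real vector. -/
noncomputable def vecNorm {n : ℕ} (v : Fin n → ℝ) : ℝ :=
  ‖(WithLp.equiv 2 (Fin n → ℝ)).symm v‖

/-- The (2-norm) condition number `κ(B) = ‖B‖‖B⁻¹‖`. -/
noncomputable def condNum {n : ℕ} (A : Matrix (Fin n) (Fin n) ℝ) : ℝ :=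
  specNorm A * specNorm A⁻¹

/-- The GADI iteration matrix `T_F(α,ω) = S⁻¹ H⁻¹ (α² I + M N − (1−ω) α A)`
with `A = M + N`, `H = α I + M`, `S = α I + N`. -/
noncomputable def gadiTF {n : ℕ} (M N : Matrix (Fin n) (Fin n) ℝ) (α ω : ℝ) :
    Matrix (Fin n) (Fin n) ℝ :=
  (α • 1 + N)⁻¹ * (α • 1 + M)⁻¹ * ((α ^ 2) • 1 + M * N - ((1 - ω) * α) • (M + N))

section aux

variable {n : ℕ}

lemma specNorm_nonneg (A : Matrix (Fin n) (Fin n) ℝ) : 0 ≤ specNorm A := norm_nonneg _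

lemma vecNorm_nonneg (v : Fin n → ℝ) : 0 ≤ vecNorm v := norm_nonneg _

lemma specNorm_mul_le (A B : Matrix (Fin n) (Fin n) ℝ) :
    specNorm (A * B) ≤ specNorm A * specNorm B := by
  unfold specNorm; rw [_root_.map_mul]; exact norm_mul_le _ _

lemma specNorm_add_le (A B : Matrix (Fin n) (Fin n) ℝ) :
    specNorm (A + B) ≤ specNorm A + specNorm B := by
  unfold specNorm; rw [map_add]; exact norm_add_le _ _

lemma specNorm_one_le : specNorm (1 : Matrix (Fin n) (Fin n) ℝ) ≤ 1 := by
  unfold specNorm; rw [_root_.map_one]; exact ContinuousLinearMap.norm_id_le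

lemma vecNorm_mulVec_le (A : Matrix (Fin n) (Fin n) ℝ) (v : Fin n → ℝ) :
    vecNorm (A *ᵥ v) ≤ specNorm A * vecNorm v := by
  unfold vecNorm specNorm
  rw [WithLp.equiv_symm_apply, ← Matrix.toEuclideanCLM_toLp]
  exact (Matrix.toEuclideanCLM (𝕜 := ℝ) A).le_opNorm _

lemma vecNorm_add_le (u v : Fin n → ℝ) : vecNorm (u + v) ≤ vecNorm u + vecNorm v := by
  unfold vecNorm
  simp only [WithLp.equiv_symm_apply, WithLp.toLp_add]
  exact norm_add_le _ _

lemma condNum_ge_one (hn : 0 < n) (A : Matrix (Fin n) (Fin n) ℝ) (hA : IsUnit A.det) :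
    1 ≤ specNorm A * specNorm A⁻¹ := by
  haveI : Nonempty (Fin n) := Fin.pos_iff_nonempty.mp hn
  haveI : Nontrivial (EuclideanSpace ℝ (Fin n)) := inferInstance
  have h1 : specNorm (1 : Matrix (Fin n) (Fin n) ℝ) = 1 := by
    unfold specNorm; rw [_root_.map_one]; exact ContinuousLinearMap.norm_id
  calc (1:ℝ) = specNorm (A * A⁻¹) := by rw [Matrix.mul_nonsing_inv A hA, h1]
    _ ≤ _ := specNorm_mul_le _ _

end aux

set_option maxHeartbeats 2000000 in
/-- **Bound on the computed correction `ŷ`.** If `J_S = (S+F_S)⁻¹S − I` and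
`P_H = H(H+F_H)⁻¹ − I` satisfy `‖J_S‖, ‖P_H‖ ≤ 1`, `x = A⁻¹ b`,
`r̂ = A(x − x̂) + Δr`, `ŷ = (2−ω)α (S+F_S)⁻¹(H+F_H)⁻¹ r̂`, then
`‖ŷ‖ ≤ c_F(1 + (2‖P_H‖ + ‖J_S‖)κ(A))‖x − x̂‖ + 4 c_F‖A⁻¹‖‖Δr‖`,
where `c_F = ‖I − T_F(α,ω)‖`. -/
theorem correction_norm_bound {n : ℕ}
    (M N A H S F_H F_S : Matrix (Fin n) (Fin n) ℝ) (hA : A = M + N)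
    (α ω : ℝ) (hα : 0 < α) (hω : ω ∈ Set.Ico (0 : ℝ) 2)
    (hH : H = α • 1 + M) (hS : S = α • 1 + N)
    (hAinv : IsUnit A.det) (hHinv : IsUnit H.det) (hSinv : IsUnit S.det)
    (hHFinv : IsUnit (H + F_H).det) (hSFinv : IsUnit (S + F_S).det)
    (J_S P_H : Matrix (Fin n) (Fin n) ℝ)
    (hJS : J_S = (S + F_S)⁻¹ * S - 1) (hPH : P_H = H * (H + F_H)⁻¹ - 1)
    (hJSnorm : specNorm J_S ≤ 1) (hPHnorm : specNorm P_H ≤ 1)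
    (b x xh Δr rh yh : Fin n → ℝ)
    (hx : x = A⁻¹ *ᵥ b)
    (hrh : rh = A *ᵥ (x - xh) + Δr)
    (hyh : yh = ((2 - ω) * α) • (((S + F_S)⁻¹ * (H + F_H)⁻¹) *ᵥ rh)) :
    vecNorm yh ≤
      specNorm (1 - gadiTF M N α ω) *
          (1 + (2 * specNorm P_H + specNorm J_S) * condNum A) * vecNorm (x - xh) +
        4 * specNorm (1 - gadiTF M N α ω) * specNorm A⁻¹ * vecNorm Δr := by
  set T := gadiTF M N α ω with hT
  set c := specNorm (1 - T) with hc
  set p := specNorm P_H with hp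
  set j := specNorm J_S with hj
  set a := specNorm A⁻¹ with ha
  set nA := specNorm A with hnA
  have hc0 : 0 ≤ c := specNorm_nonneg _
  have hp0 : 0 ≤ p := specNorm_nonneg _
  have hj0 : 0 ≤ j := specNorm_nonneg _
  have ha0 : 0 ≤ a := specNorm_nonneg _
  have hnA0 : 0 ≤ nA := specNorm_nonneg _
  have hcond : condNum A = nA * a := rfl
  rcases Nat.eq_zero_or_pos n with h0 | hn
  · -- trivial case `n = 0`
    subst h0
    have hy0 : vecNorm yh = 0 := by
      have : (WithLp.equiv 2 (Fin 0 → ℝ)).symm yh = 0 := Subsingleton.elim _ _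
      rw [vecNorm, this, norm_zero]
    rw [hy0, hcond]
    have h1 : 0 ≤ (2 * p + j) * (nA * a) := by positivity
    have h2 : 0 ≤ c * (1 + (2 * p + j) * (nA * a)) * vecNorm (x - xh) :=
      mul_nonneg (mul_nonneg hc0 (by linarith)) (vecNorm_nonneg _)
    have h3 : 0 ≤ 4 * c * a * vecNorm Δr := by
      have := vecNorm_nonneg Δr; positivity
    linarith
  -- main case
  have hκ : 1 ≤ nA * a := condNum_ge_one hn A hAinv
  -- The iteration-matrix identity : 1 - T = (2-ω)α • (S⁻¹ H⁻¹ A)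
  have hgadi : T = S⁻¹ * H⁻¹ * ((α ^ 2) • 1 + M * N - ((1 - ω) * α) • A) := by
    rw [hT, gadiTF, ← hH, ← hS, ← hA]
  have hHS : H * S = (α ^ 2) • (1 : Matrix (Fin n) (Fin n) ℝ) + α • A + M * N := by
    rw [hH, hS, hA]
    simp only [add_mul, mul_add, smul_mul_assoc, mul_smul_comm, smul_smul, one_mul, mul_one,
      smul_add, pow_two]
    abel
  have hkey : H * S - ((α ^ 2) • 1 + M * N - ((1 - ω) * α) • A) = ((2 - ω) * α) • A := by
    rw [hHS]
    module
  have hone : S⁻¹ * H⁻¹ * (H * S) = 1 := by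
    rw [mul_assoc, ← mul_assoc H⁻¹ H S, Matrix.nonsing_inv_mul _ hHinv, one_mul,
      Matrix.nonsing_inv_mul _ hSinv]
  have hTid : 1 - T = ((2 - ω) * α) • (S⁻¹ * H⁻¹ * A) := by
    calc 1 - T = S⁻¹ * H⁻¹ * (H * S) - S⁻¹ * H⁻¹ * ((α ^ 2) • 1 + M * N - ((1 - ω) * α) • A) := by
          rw [hone, hgadi]
      _ = S⁻¹ * H⁻¹ * (H * S - ((α ^ 2) • 1 + M * N - ((1 - ω) * α) • A)) :=
          (mul_sub _ _ _).symm
      _ = S⁻¹ * H⁻¹ * (((2 - ω) * α) • A) := by rw [hkey]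
      _ = ((2 - ω) * α) • (S⁻¹ * H⁻¹ * A) := by rw [mul_smul_comm]
  have hSHfac : ((2 - ω) * α) • (S⁻¹ * H⁻¹) = (1 - T) * A⁻¹ := by
    rw [hTid, smul_mul_assoc, mul_assoc, Matrix.mul_nonsing_inv _ hAinv, mul_one]
  -- perturbation factorizations
  have hSF : (1 + J_S) * S⁻¹ = (S + F_S)⁻¹ := by
    have h1 : (1 : Matrix (Fin n) (Fin n) ℝ) + J_S = (S + F_S)⁻¹ * S := by rw [hJS]; abel
    rw [h1, mul_assoc, Matrix.mul_nonsing_inv _ hSinv, mul_one]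
  have hHF : H⁻¹ * (1 + P_H) = (H + F_H)⁻¹ := by
    have h1 : (1 : Matrix (Fin n) (Fin n) ℝ) + P_H = H * (H + F_H)⁻¹ := by rw [hPH]; abel
    rw [h1, ← mul_assoc, Matrix.nonsing_inv_mul _ hHinv, one_mul]
  set G := (1 + J_S) * ((1 - T) * A⁻¹) * (1 + P_H) with hG
  have hfac : ((2 - ω) * α) • ((S + F_S)⁻¹ * (H + F_H)⁻¹) = G := by
    rw [← hSF, ← hHF, hG, ← hSHfac]
    simp only [mul_smul_comm, smul_mul_assoc, mul_assoc]
  have hyh2 : yh = G *ᵥ rh := by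
    rw [hyh, ← Matrix.smul_mulVec, hfac]
  have hGA : G * A = (1 + J_S) * ((1 - T) * (1 + A⁻¹ * (P_H * A))) := by
    have h1 : A⁻¹ * ((1 + P_H) * A) = 1 + A⁻¹ * (P_H * A) := by
      rw [add_mul, one_mul, mul_add, Matrix.nonsing_inv_mul _ hAinv]
    rw [hG]
    calc (1 + J_S) * ((1 - T) * A⁻¹) * (1 + P_H) * A
        = (1 + J_S) * ((1 - T) * (A⁻¹ * ((1 + P_H) * A))) := by
          simp only [mul_assoc]
      _ = (1 + J_S) * ((1 - T) * (1 + A⁻¹ * (P_H * A))) := by rw [h1]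
  have hdecomp : yh = (G * A) *ᵥ (x - xh) + G *ᵥ Δr := by
    rw [hyh2, hrh, Matrix.mulVec_add, Matrix.mulVec_mulVec]
  -- norm bounds
  have h1J : specNorm (1 + J_S) ≤ 1 + j := by
    refine le_trans (specNorm_add_le _ _) ?_
    have := specNorm_one_le (n := n); linarith
  have h1P : specNorm (1 + P_H) ≤ 1 + p := by
    refine le_trans (specNorm_add_le _ _) ?_
    have := specNorm_one_le (n := n); linarith
  have hinner : specNorm (1 + A⁻¹ * (P_H * A)) ≤ 1 + a * (p * nA) := by
    refine le_trans (specNorm_add_le _ _) ?_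
    have h2 : specNorm (A⁻¹ * (P_H * A)) ≤ a * (p * nA) := by
      refine le_trans (specNorm_mul_le _ _) ?_
      have h3 : specNorm (P_H * A) ≤ p * nA := specNorm_mul_le _ _
      exact mul_le_mul_of_nonneg_left h3 ha0
    have := specNorm_one_le (n := n); linarith
  have hGAnorm : specNorm (G * A) ≤ (1 + j) * (c * (1 + a * (p * nA))) := by
    rw [hGA]
    refine le_trans (specNorm_mul_le _ _) ?_
    have h2 : specNorm ((1 - T) * (1 + A⁻¹ * (P_H * A))) ≤ c * (1 + a * (p * nA)) := by
      refine le_trans (specNorm_mul_le _ _) ?_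
      exact mul_le_mul_of_nonneg_left hinner hc0
    exact mul_le_mul h1J h2 (specNorm_nonneg _) (by linarith)
  have hGnorm : specNorm G ≤ (1 + j) * (c * a * (1 + p)) := by
    rw [hG]
    refine le_trans (specNorm_mul_le _ _) ?_
    have h2 : specNorm ((1 + J_S) * ((1 - T) * A⁻¹)) ≤ (1 + j) * (c * a) := by
      refine le_trans (specNorm_mul_le _ _) ?_
      have h3 : specNorm ((1 - T) * A⁻¹) ≤ c * a := specNorm_mul_le _ _
      have h5 : 0 ≤ (1:ℝ) + j := by linarith
      nlinarith [specNorm_nonneg ((1 - T) * A⁻¹), specNorm_nonneg (1 + J_S)]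
    have h6 : 0 ≤ specNorm ((1 + J_S) * ((1 - T) * A⁻¹)) := specNorm_nonneg _
    have h7 : 0 ≤ (1:ℝ) + p := by linarith
    nlinarith [specNorm_nonneg (1 + P_H), mul_nonneg (mul_nonneg hc0 ha0) h7,
      mul_nonneg (mul_nonneg (by linarith : (0:ℝ) ≤ 1 + j) hc0) ha0]
  have hbound : vecNorm yh ≤
      (1 + j) * (c * (1 + a * (p * nA))) * vecNorm (x - xh) +
        (1 + j) * (c * a * (1 + p)) * vecNorm Δr := by
    rw [hdecomp]
    refine le_trans (vecNorm_add_le _ _) ?_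
    have b1 : vecNorm ((G * A) *ᵥ (x - xh)) ≤ (1 + j) * (c * (1 + a * (p * nA))) * vecNorm (x - xh) := by
      refine le_trans (vecNorm_mulVec_le _ _) ?_
      exact mul_le_mul_of_nonneg_right hGAnorm (vecNorm_nonneg _)
    have b2 : vecNorm (G *ᵥ Δr) ≤ (1 + j) * (c * a * (1 + p)) * vecNorm Δr := by
      refine le_trans (vecNorm_mulVec_le _ _) ?_
      exact mul_le_mul_of_nonneg_right hGnorm (vecNorm_nonneg _)
    linarith
  refine le_trans hbound ?_
  rw [hcond]
  have he0 : 0 ≤ vecNorm (x - xh) := vecNorm_nonneg _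
  have hr0 : 0 ≤ vecNorm Δr := vecNorm_nonneg _
  generalize vecNorm (x - xh) = E at he0 ⊢
  generalize vecNorm Δr = R at hr0 ⊢
  clear_value T c p j a nA
  clear hbound hc hp hj ha hnA hcond
  have hκ0 : 0 ≤ nA * a := mul_nonneg hnA0 ha0
  have coeff1 : (1 + j) * (c * (1 + a * (p * nA))) ≤ c * (1 + (2 * p + j) * (nA * a)) := by
    have key : (1 + j) * (1 + a * (p * nA)) ≤ 1 + (2 * p + j) * (nA * a) := by
      nlinarith [mul_nonneg (mul_nonneg hp0 hκ0) (by linarith : (0:ℝ) ≤ 1 - j),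
        mul_nonneg hj0 (by linarith : (0:ℝ) ≤ nA * a - 1)]
    calc (1 + j) * (c * (1 + a * (p * nA))) = c * ((1 + j) * (1 + a * (p * nA))) := by ring
      _ ≤ c * (1 + (2 * p + j) * (nA * a)) := mul_le_mul_of_nonneg_left key hc0
  have coeff2 : (1 + j) * (c * a * (1 + p)) ≤ 4 * c * a := by
    have key : (1 + j) * (1 + p) ≤ 4 := by nlinarith
    calc (1 + j) * (c * a * (1 + p)) = (c * a) * ((1 + j) * (1 + p)) := by ring
      _ ≤ (c * a) * 4 := mul_le_mul_of_nonneg_left key (mul_nonneg hc0 ha0)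
      _ = 4 * c * a := by ring
  have := mul_le_mul_of_nonneg_right coeff1 he0
  have := mul_le_mul_of_nonneg_right coeff2 hr0
  linarith
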